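/- Let d ≥ 1 and C > 0. There exist constants C' > 0 and θ_0 > 0 such that for every θ ∈ (0, θ_0] and every unit vector q̂ ∈ R^d, the set D_θ := {x ∈ R^d : |x| ≤ 1 and ⟨x − q̂, q̂⟩ ≥ −Cθ|x − q̂|} has Lebesgue measure |D_θ| ≤ C' θ^{d+1}. -/

import Mathlib

open MeasureTheory Metric Set
open scoped RealInnerProductSpace

/-- The set `D_θ = {x : |x| ≤ 1, ⟨x − q̂, q̂⟩ ≥ −Cθ|x − q̂|}` has Lebesgue
measure at most `C' θ^{d+1}` for all sufficiently small `θ > 0`. -/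
theorem stmt10 (d : ℕ) (hd : 1 ≤ d) (C : ℝ) (hC : 0 < C) :
    ∃ C' : ℝ, 0 < C' ∧ ∃ θ₀ : ℝ, 0 < θ₀ ∧
      ∀ θ : ℝ, θ ∈ Set.Ioc (0 : ℝ) θ₀ →
        ∀ qhat : EuclideanSpace ℝ (Fin d), ‖qhat‖ = 1 →
          volume {x : EuclideanSpace ℝ (Fin d) |
              ‖x‖ ≤ 1 ∧ -(C * θ * ‖x - qhat‖) ≤ ⟪x - qhat, qhat⟫} ≤
            ENNReal.ofReal (C' * θ ^ (d + 1)) := by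
  refine ⟨(4 * C) ^ d * C, by positivity, 1, one_pos, ?_⟩
  rintro θ ⟨hθ0, hθ1⟩ qhat hq
  obtain ⟨n, rfl⟩ : ∃ n, d = n + 1 := ⟨d - 1, (Nat.succ_pred_eq_of_pos hd).symm⟩
  -- orthonormal basis with b 0 = qhat
  have hcard : Module.finrank ℝ (EuclideanSpace ℝ (Fin (n + 1))) = Fintype.card (Fin (n + 1)) := by
    simp
  have horth : Orthonormal ℝ (({0} : Set (Fin (n + 1))).restrict (fun _ => qhat)) := by
    rw [orthonormal_iff_ite]
    rintro ⟨i, hi⟩ ⟨j, hj⟩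
    simp only [Set.mem_singleton_iff] at hi hj
    subst hi; subst hj
    have : ⟪qhat, qhat⟫ = 1 := by rw [real_inner_self_eq_norm_sq, hq]; norm_num
    rw [if_pos rfl]; exact this
  obtain ⟨b, hb⟩ := horth.exists_orthonormalBasis_extension_of_card_eq hcard
  have hb0 : b 0 = qhat := hb 0 rfl
  -- the bounding box
  set u : Fin (n + 1) → ℝ := fun i => if i = 0 then 2 * C ^ 2 * θ ^ 2 else 2 * C * θ with hu
  set B : Set (EuclideanSpace ℝ (Fin (n + 1))) :=
    WithLp.ofLp ⁻¹' Set.univ.pi (fun i => Set.Icc (-(u i)) (u i)) with hB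
  have hsub : {x : EuclideanSpace ℝ (Fin (n + 1)) |
      ‖x‖ ≤ 1 ∧ -(C * θ * ‖x - qhat‖) ≤ ⟪x - qhat, qhat⟫} ⊆
      (fun x => b.repr (x - qhat)) ⁻¹' B := by
    rintro x ⟨h1, h2⟩
    set y := x - qhat with hy
    -- ⟪y, qhat⟫ ≤ -‖y‖²/2
    have hex : ‖x‖ ^ 2 = ‖y‖ ^ 2 + 2 * ⟪y, qhat⟫ + 1 := by
      have : x = y + qhat := by rw [hy]; abel
      rw [this, @norm_add_sq_real, hq]; ring
    have hle : ⟪y, qhat⟫ ≤ -(‖y‖ ^ 2) / 2 := by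
      nlinarith [norm_nonneg x, sq_nonneg (‖x‖ - 1)]
    have hyle : ‖y‖ ≤ 2 * C * θ := by
      rcases eq_or_lt_of_le (norm_nonneg y) with h | h
      · rw [← h]; positivity
      · nlinarith
    have hinner : |⟪y, qhat⟫| ≤ 2 * C ^ 2 * θ ^ 2 := by
      rw [abs_le]
      constructor
      · nlinarith
      · nlinarith [norm_nonneg y, sq_nonneg ‖y‖]
    intro i _
    have hzi : b.repr y i = ⟪b i, y⟫ := b.repr_apply_apply y i
    rcases eq_or_ne i 0 with rfl | hi
    · have : b.repr y 0 = ⟪y, qhat⟫ := by rw [hzi, hb0, real_inner_comm]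
      simp only [hu, if_pos rfl]
      rw [this] at *
      constructor
      · linarith [neg_abs_le (⟪y, qhat⟫), hinner]
      · linarith [le_abs_self (⟪y, qhat⟫)]
    · have habs : |b.repr y i| ≤ ‖y‖ := by
        rw [hzi]
        calc |⟪b i, y⟫| ≤ ‖b i‖ * ‖y‖ := abs_real_inner_le_norm _ _
        _ = ‖y‖ := by rw [b.orthonormal.1 i, one_mul]
      simp only [hu, if_neg hi]
      constructor
      · linarith [neg_abs_le (b.repr y i)]
      · linarith [le_abs_self (b.repr y i)]
  have hmp : MeasurePreserving (fun x : EuclideanSpace ℝ (Fin (n + 1)) => b.repr (x - qhat))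
      volume volume :=
    b.measurePreserving_repr.comp (measurePreserving_sub_right volume qhat)
  have hBmeas : MeasurableSet B :=
    (MeasurableSet.univ_pi (fun i => measurableSet_Icc)).preimage (MeasurableEquiv.toLp 2 (Fin (n + 1) → ℝ)).symm.measurable
  have hvolB : volume B = ∏ i, ENNReal.ofReal (2 * u i) := by
    have := (EuclideanSpace.volume_preserving_symm_measurableEquiv_toLp (Fin (n + 1))).measure_preimage
      (MeasurableSet.univ_pi (fun i : Fin (n + 1) => measurableSet_Icc
        (a := -(u i)) (b := u i))).nullMeasurableSet
    have hBeq : B = (MeasurableEquiv.toLp 2 (Fin (n + 1) → ℝ)).symm ⁻¹'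
        (Set.univ.pi (fun i => Set.Icc (-(u i)) (u i))) := rfl
    rw [hBeq, this, volume_pi_pi]
    congr 1
    ext i
    rw [Real.volume_Icc]
    congr 1
    ring
  calc volume {x : EuclideanSpace ℝ (Fin (n + 1)) |
        ‖x‖ ≤ 1 ∧ -(C * θ * ‖x - qhat‖) ≤ ⟪x - qhat, qhat⟫}
      ≤ volume ((fun x => b.repr (x - qhat)) ⁻¹' B) := measure_mono hsub
    _ = volume B := hmp.measure_preimage hBmeas.nullMeasurableSet
    _ = ∏ i, ENNReal.ofReal (2 * u i) := hvolB
    _ = ENNReal.ofReal (∏ i, 2 * u i) := by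
        rw [ENNReal.ofReal_prod_of_nonneg]
        intro i _
        simp only [hu]
        split_ifs <;> positivity
    _ ≤ ENNReal.ofReal ((4 * C) ^ (n + 1) * C * θ ^ (n + 1 + 1)) := by
        apply ENNReal.ofReal_le_ofReal
        rw [Fin.prod_univ_succ]
        have h1 : ∀ i : Fin n, 2 * u i.succ = 4 * C * θ := by
          intro i; simp [hu, Fin.succ_ne_zero i]; ring
        rw [Finset.prod_congr rfl (fun i _ => h1 i), Finset.prod_const]
        simp only [hu, if_pos rfl, Finset.card_univ, Fintype.card_fin]
        ring_nf
        apply le_of_eq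
        ring
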